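/- At a stagnation streamline of a 2-D Euler flow (where v_n = U·n = 0 across the streamline and the state W is continuous), the matrix A_n = n_xA + n_yB has rank exactly 2, and the kernel condition A_nᵀ(ψ⁺ − ψ⁻) = 0 on the adjoint jump is equivalent to the two scalar relations [n_xψ₂ + n_yψ₃] = 0 and n_y[ψ₁] − v_t[ψ₂] + n_yH[ψ₄] = 0 (for n_x generic). -/
import Mathlib


/-- The 2-D Euler flux Jacobian in the direction `(nx, ny)`:  `An γ u v H nx ny = nx • A + ny • B`,
where `A`, `B` are the Jacobians of the Euler fluxes w.r.t. conservative variables. -/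
noncomputable def An (γ u v H nx ny : ℝ) : Matrix (Fin 4) (Fin 4) ℝ :=
  !![0, nx, ny, 0;
     (γ-1)*((u^2+v^2)/2)*nx - u*(u*nx+v*ny), (u*nx+v*ny)-(γ-2)*u*nx, u*ny-(γ-1)*v*nx, (γ-1)*nx;
     (γ-1)*((u^2+v^2)/2)*ny - v*(u*nx+v*ny), v*nx-(γ-1)*u*ny, (u*nx+v*ny)-(γ-2)*v*ny, (γ-1)*ny;
     ((γ-1)*((u^2+v^2)/2)-H)*(u*nx+v*ny), H*nx-(γ-1)*u*(u*nx+v*ny), H*ny-(γ-1)*v*(u*nx+v*ny), γ*(u*nx+v*ny)]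

/- At a stagnation streamline (vₙ = U·n = 0, state continuous), the normal Jacobian
Aₙ = n_x A + n_y B has rank exactly 2, and the kernel condition Aₙᵀ(ψ⁺ − ψ⁻) = 0 on
the adjoint jump is equivalent to the two scalar relations
[n_xψ₂ + n_yψ₃] = 0 and n_y[ψ₁] − v_t[ψ₂] + n_y H[ψ₄] = 0 (for generic n). -/
theorem stagnation_streamline_adjoint_jump (γ u v H c vt nx ny : ℝ) (ψp ψm : Fin 4 → ℝ)
    (hγ : 1 < γ) (hc : 0 < c)
    (hn : nx^2 + ny^2 = 1) (hnx : nx ≠ 0) (hny : ny ≠ 0)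
    (hvn : u*nx + v*ny = 0) (hvt : vt = u*(-ny) + v*nx) (hvt0 : vt ≠ 0)
    (hH : H = c^2/(γ-1) + (u^2+v^2)/2) :
    (An γ u v H nx ny).rank = 2 ∧
    ((An γ u v H nx ny).transpose.mulVec (ψp - ψm) = 0 ↔
      (nx * (ψp 1 - ψm 1) + ny * (ψp 2 - ψm 2) = 0 ∧
       ny * (ψp 0 - ψm 0) - vt * (ψp 1 - ψm 1) + ny * H * (ψp 3 - ψm 3) = 0)) := by
  have hγ1 : (0:ℝ) < γ - 1 := by linarith
  have hγ1' : γ - 1 ≠ 0 := ne_of_gt hγ1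
  subst hvt
  have hq : 0 < u^2 + v^2 := by
    have key : (u*(-ny)+v*nx)^2 + (u*nx+v*ny)^2 = (u^2+v^2)*(nx^2+ny^2) := by ring
    rcases hvt0.lt_or_gt with h|h <;> nlinarith
  have hAn : An γ u v H nx ny =
      !![0, nx, ny, 0;
         (γ-1)*((u^2+v^2)/2)*nx, -((γ-2)*u*nx), u*ny-(γ-1)*v*nx, (γ-1)*nx;
         (γ-1)*((u^2+v^2)/2)*ny, v*nx-(γ-1)*u*ny, -((γ-2)*v*ny), (γ-1)*ny;
         0, H*nx, H*ny, 0] := by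
    unfold An
    rw [hvn]
    congr 1 <;> ring_nf
  have hcancel : ∀ (a X : ℝ), a ≠ 0 → a * X = 0 → X = 0 := by
    intro a X ha h
    rcases mul_eq_zero.1 h with h|h
    · exact absurd h ha
    · exact h
  constructor
  · -- rank = 2
    set P : Matrix (Fin 4) (Fin 2) ℝ :=
      !![1,0; 0,1; (u*(-ny)+v*nx)/nx, ny/nx; H,0] with hP
    set M : Matrix (Fin 2) (Fin 4) ℝ :=
      !![0,nx,ny,0;
         (γ-1)*((u^2+v^2)/2)*nx, -((γ-2)*u*nx), u*ny-(γ-1)*v*nx, (γ-1)*nx] with hM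
    have hfac : An γ u v H nx ny = P * M := by
      rw [hAn]
      ext i j
      fin_cases i <;> fin_cases j <;>
        simp [hP, hM, Matrix.mul_apply, Fin.sum_univ_two] <;>
        field_simp <;> ring
    have hub : (An γ u v H nx ny).rank ≤ 2 := by
      rw [hfac]
      calc (P * M).rank ≤ M.rank := Matrix.rank_mul_le_right P M
        _ ≤ 2 := by simpa using M.rank_le_card_height
    set Q : Matrix (Fin 2) (Fin 4) ℝ := !![1,0,0,0; 0,1,0,0] with hQ
    set R : Matrix (Fin 4) (Fin 2) ℝ := !![1,0; 0,1; 0,0; 0,0] with hR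
    have hsub : Q * An γ u v H nx ny * R =
        !![0, nx; (γ-1)*((u^2+v^2)/2)*nx, -((γ-2)*u*nx)] := by
      rw [hAn]
      ext i j
      fin_cases i <;> fin_cases j <;>
        simp [hQ, hR, Matrix.mul_apply, Fin.sum_univ_two, Fin.sum_univ_four,
              Matrix.vecHead, Matrix.vecTail]
    have hdet : IsUnit (!![0, nx; (γ-1)*((u^2+v^2)/2)*nx, -((γ-2)*u*nx)] :
        Matrix (Fin 2) (Fin 2) ℝ) := by
      rw [Matrix.isUnit_iff_isUnit_det]
      have hdv : (!![0, nx; (γ-1)*((u^2+v^2)/2)*nx, -((γ-2)*u*nx)] :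
          Matrix (Fin 2) (Fin 2) ℝ).det = -((γ-1)*((u^2+v^2)/2)*nx^2) := by
        simp [Matrix.det_fin_two]; ring
      rw [hdv]
      refine isUnit_iff_ne_zero.2 (fun h => ?_)
      have hpos : 0 < (γ-1)*((u^2+v^2)/2)*nx^2 := by positivity
      linarith
    have hlb : 2 ≤ (An γ u v H nx ny).rank := by
      have h1 : (Q * An γ u v H nx ny * R).rank = 2 := by
        rw [hsub]
        simpa using Matrix.rank_of_isUnit _ hdet
      calc (2:ℕ) = (Q * An γ u v H nx ny * R).rank := h1.symm
        _ ≤ (Q * An γ u v H nx ny).rank := Matrix.rank_mul_le_left _ _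
        _ ≤ (An γ u v H nx ny).rank := Matrix.rank_mul_le_right _ _
    omega
  · -- the kernel condition
    rw [hAn]
    constructor
    · intro h
      have h2 := congrFun h 2
      have h3 := congrFun h 3
      simp [Matrix.mulVec, dotProduct, Fin.sum_univ_four] at h2 h3
      have e1 : nx * (ψp 1 - ψm 1) + ny * (ψp 2 - ψm 2) = 0 := by
        refine hcancel (γ-1) _ hγ1' ?_
        linear_combination h3
      refine ⟨e1, ?_⟩
      linear_combination h2 + (γ-2)*v*e1
    · rintro ⟨e1, e2⟩
      funext j
      fin_cases j <;>
        simp [Matrix.mulVec, dotProduct, Fin.sum_univ_four]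
      · linear_combination ((γ-1)*((u^2+v^2)/2))*e1
      · refine hcancel ny _ hny ?_
        linear_combination (v*nx - (γ-1)*u*ny)*e1 + nx*e2
      · linear_combination (-((γ-2)*v))*e1 + e2
      · linear_combination (γ-1)*e1
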